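/- Let R be a commutative ring that is either an integral domain or a local ring, and let M be a torsion-free R-module (every regular element of R acts injectively on M). Then the trivial extension R ⋉ M is a Prüfer ring if and only if R is a Prüfer ring and M_m = r·M_m for every maximal ideal m of R and every regular element r of R. -/

import Mathlib

open Pointwise

/-- The set of zero-divisors of a commutative ring `A`. -/
def zdivSet (A : Type*) [CommRing A] : Set A := {a | ∃ b, b ≠ 0 ∧ a * b = 0}

/-- A commutative ring is a Prüfer ring if every nonzero finitely generated regular ideal
is projective (equivalently, invertible). -/
def IsPruferRing (A : Type*) [CommRing A] : Prop :=
  ∀ I : Ideal A, I ≠ ⊥ → I.FG → (∃ r ∈ I, r ∈ nonZeroDivisors A) → Module.Projective A I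

open TrivSqZeroExt

section Aux

variable {R M : Type*} [CommRing R] [AddCommGroup M] [Module R M]
    [Module Rᵐᵒᵖ M] [IsCentralScalar R M]

/-- fst as a ring hom. -/
private def fstRH (R M : Type*) [CommRing R] [AddCommGroup M] [Module R M]
    [Module Rᵐᵒᵖ M] [IsCentralScalar R M] : TrivSqZeroExt R M →+* R where
  toFun := TrivSqZeroExt.fst
  map_one' := fst_one (R := R) (M := M)
  map_mul' := fst_mul (R := R) (M := M)
  map_zero' := fst_zero (R := R) (M := M)
  map_add' := fst_add (R := R) (M := M)

private def sndAH (R M : Type*) [CommRing R] [AddCommGroup M] [Module R M]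
    [Module Rᵐᵒᵖ M] [IsCentralScalar R M] : TrivSqZeroExt R M →+ M where
  toFun := TrivSqZeroExt.snd
  map_zero' := snd_zero (R := R) (M := M)
  map_add' := snd_add (R := R) (M := M)

private theorem projective_of_dual {S P ι : Type*} [CommRing S] [AddCommGroup P] [Module S P]
    (v : ι → P) (c : P →ₗ[S] (ι →₀ S))
    (h : ∀ x, Finsupp.linearCombination S v (c x) = x) : Module.Projective S P :=
  Module.projective_def.mpr ⟨(Finsupp.lmapDomain S S v).comp c, fun x => by
    simpa only [LinearMap.comp_apply, Finsupp.lmapDomain_apply,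
      Finsupp.linearCombination_mapDomain, Function.id_comp] using h x⟩

private theorem inl_mem_nzd (htf : ∀ r ∈ nonZeroDivisors R,
    Function.Injective fun x : M => r • x) {r : R} (hr : r ∈ nonZeroDivisors R) :
    (inl r : TrivSqZeroExt R M) ∈ nonZeroDivisors (TrivSqZeroExt R M) := by
  rw [mem_nonZeroDivisors_iff_right]
  intro w hw
  have h1 : fst w * r = 0 := by
    have := congrArg TrivSqZeroExt.fst hw
    simpa using this
  have hfw : fst w = 0 := mem_nonZeroDivisors_iff_right.mp hr _ h1
  have h2 : r • snd w = 0 := by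
    have := congrArg TrivSqZeroExt.snd hw
    simp only [snd_mul, snd_inl, fst_inl, smul_zero, zero_add, snd_zero, op_smul_eq_smul] at this
    exact this
  have hsw : snd w = 0 := by
    have := htf r hr (a₁ := snd w) (a₂ := 0) (by simpa using h2)
    exact this
  exact TrivSqZeroExt.ext (by simpa using hfw) hsw

private theorem fst_mem_nzd {z : TrivSqZeroExt R M}
    (hz : z ∈ nonZeroDivisors (TrivSqZeroExt R M)) : fst z ∈ nonZeroDivisors R := by
  rw [mem_nonZeroDivisors_iff_right]
  intro s hs
  have hsx : ∀ x : M, s • x = 0 := by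
    intro x
    have h0 : (inr (s • x) : TrivSqZeroExt R M) * z = 0 := by
      apply TrivSqZeroExt.ext
      · simp
      · simp only [snd_mul, fst_inr, zero_smul, zero_add, snd_inr, snd_zero, op_smul_eq_smul]
        rw [← mul_smul, mul_comm, hs, zero_smul]
    have := mem_nonZeroDivisors_iff_right.mp hz _ h0
    simpa using congrArg TrivSqZeroExt.snd this
  have h0 : (inl s : TrivSqZeroExt R M) * z = 0 := by
    apply TrivSqZeroExt.ext
    · simpa using hs
    · simp only [snd_mul, fst_inl, snd_inl, smul_zero, add_zero, snd_zero, op_smul_eq_smul]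
      exact hsx (snd z)
  have := mem_nonZeroDivisors_iff_right.mp hz _ h0
  simpa using congrArg TrivSqZeroExt.fst this

end Aux

section Aux2
variable {R M : Type*} [CommRing R] [AddCommGroup M] [Module R M]

private theorem div_global_of_local
    (h : ∀ (m : Ideal R) [m.IsMaximal], ∀ r ∈ nonZeroDivisors R,
      r • (⊤ : Submodule R (LocalizedModule m.primeCompl M)) = ⊤)
    {r : R} (hr : r ∈ nonZeroDivisors R) (x : M) : ∃ y : M, r • y = x := by
  set p : Submodule R M := LinearMap.range (DistribMulAction.toLinearMap R M r) with hp
  suffices hx : x ∈ p by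
    obtain ⟨y, hy⟩ := hx
    exact ⟨y, hy⟩
  set T : Ideal R := Submodule.comap (LinearMap.toSpanSingleton R M x) p with hT
  have hTtop : T = ⊤ := by
    by_contra hne
    obtain ⟨m, hm, hTm⟩ := Ideal.exists_le_maximal T hne
    have hmem : LocalizedModule.mk x 1 ∈
        r • (⊤ : Submodule R (LocalizedModule m.primeCompl M)) := by
      rw [h m r hr]; trivial
    rw [show r • (⊤ : Submodule R (LocalizedModule m.primeCompl M)) =
        Submodule.map (DistribMulAction.toLinearMap R _ r) ⊤ from rfl,
      Submodule.mem_map] at hmem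
    obtain ⟨v, -, hv⟩ := hmem
    induction v using LocalizedModule.induction_on with
    | h y s =>
      have hv' : LocalizedModule.mk (r • y) s = LocalizedModule.mk x 1 := by
        rw [← LocalizedModule.smul'_mk]
        exact hv
      rw [LocalizedModule.mk_eq] at hv'
      obtain ⟨u, hu⟩ := hv'
      have hmemT : ((u : R) * (s : R)) ∈ T := by
        rw [hT]
        simp only [Submodule.mem_comap, LinearMap.toSpanSingleton_apply]
        refine ⟨(u : R) • y, ?_⟩
        have : (u : R) • (1 : m.primeCompl) • (r • y) = (u : R) • (s : R) • x := by
          simpa [Submonoid.smul_def] using hu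
        simp only [one_smul] at this
        simp only [DistribMulAction.toLinearMap, DistribSMul.toLinearMap_apply]
        rw [smul_comm, this, mul_smul]
      have : (u : R) * (s : R) ∉ m := by
        have := mul_mem u.2 s.2
        simpa [Ideal.primeCompl] using this
      exact this (hTm hmemT)
  have : (1 : R) ∈ T := hTtop ▸ Submodule.mem_top
  simpa only [hT, Submodule.mem_comap, LinearMap.toSpanSingleton_apply, one_smul] using this

private theorem div_local_of_global
    (h : ∀ r ∈ nonZeroDivisors R, ∀ x : M, ∃ y : M, r • y = x)
    (m : Ideal R) [m.IsMaximal] {r : R} (hr : r ∈ nonZeroDivisors R) :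
    r • (⊤ : Submodule R (LocalizedModule m.primeCompl M)) = ⊤ := by
  rw [eq_top_iff]
  rintro u -
  induction u using LocalizedModule.induction_on with
  | h x s =>
    obtain ⟨y, hy⟩ := h r hr x
    have : r • LocalizedModule.mk y s = LocalizedModule.mk x s := by
      rw [LocalizedModule.smul'_mk, hy]
    rw [← this]
    exact Submodule.smul_mem_pointwise_smul _ r ⊤ Submodule.mem_top

end Aux2

section Aux3
variable {R M : Type*} [CommRing R] [AddCommGroup M] [Module R M]
    [Module Rᵐᵒᵖ M] [IsCentralScalar R M]

private theorem div_of_prufer [Nontrivial R]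
    (htf : ∀ r ∈ nonZeroDivisors R, Function.Injective fun x : M => r • x)
    (hPA : IsPruferRing (TrivSqZeroExt R M))
    {r : R} (hr : r ∈ nonZeroDivisors R) (x : M) : ∃ y : M, r • y = x := by
  classical
  set A := TrivSqZeroExt R M
  set J : Ideal A := Ideal.span {inl r, inr x} with hJ
  have hrJ : (inl r : A) ∈ J := Ideal.subset_span (by simp)
  have hxJ : (inr x : A) ∈ J := Ideal.subset_span (by simp)
  have hJfg : J.FG := ⟨{inl r, inr x}, by simp [hJ]⟩
  have hrne : (inl r : A) ≠ 0 := by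
    intro h0
    exact nonZeroDivisors.ne_zero hr (by simpa using congrArg TrivSqZeroExt.fst h0)
  have hJne : J ≠ ⊥ := (Submodule.ne_bot_iff J).mpr ⟨inl r, hrJ, hrne⟩
  have hproj := hPA J hJne hJfg ⟨inl r, hrJ, inl_mem_nzd htf hr⟩
  obtain ⟨s, hs⟩ := Module.projective_def.mp hproj
  set w : J := ⟨inr x, hxJ⟩ with hw
  set z₀ : J := ⟨inl r, hrJ⟩ with hz₀
  -- each coefficient of s w has zero fst component
  have hfst0 : ∀ z : J, fst ((s w) z : A) = 0 := by
    intro z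
    set g : J →ₗ[A] A := (Finsupp.lapply z).comp s with hg
    have hswap : (inl r : A) • w = (inr x : A) • z₀ := by
      apply Subtype.ext
      show (inl r : A) * inr x = inr x * inl r
      exact mul_comm _ _
    have : (inl r : A) * g w = (inr x : A) * g z₀ := by
      rw [← smul_eq_mul, ← smul_eq_mul, ← map_smul, ← map_smul, hswap]
    have hf := congrArg TrivSqZeroExt.fst this
    rw [fst_mul, fst_mul, fst_inl, fst_inr, zero_mul] at hf
    have : fst (g w) * r = 0 := by rw [mul_comm]; exact hf
    exact mem_nonZeroDivisors_iff_right.mp hr _ this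
  -- fst of each basis element is a multiple of r
  have hfstz : ∀ z : J, ∃ a : R, fst (z : A) = a * r := by
    intro z
    have hmem : fst (z : A) ∈ Ideal.map (fstRH R M) (Ideal.span {inl r, inr x}) :=
      Ideal.mem_map_of_mem _ z.2
    rw [Ideal.map_span] at hmem
    have himg : (fstRH R M) '' {inl r, inr x} = {r, 0} := by
      simp [fstRH, Set.image_insert_eq]
    rw [himg] at hmem
    rw [Ideal.mem_span_pair] at hmem
    obtain ⟨a, b, hab⟩ := hmem
    exact ⟨a, by rw [← hab]; ring⟩
  -- express x as a sum
  have hx : x = ∑ z ∈ (s w).support, fst (z : A) • snd ((s w) z : A) := by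
    have h1 := congrArg (J.subtype) (hs w)
    rw [Finsupp.linearCombination_apply, map_finsuppSum] at h1
    have h2 := congrArg (sndAH R M) h1
    rw [map_finsuppSum] at h2
    have h3 : (sndAH R M) (J.subtype w) = x := by simp [hw, sndAH]
    rw [h3] at h2
    rw [← h2, Finsupp.sum]
    apply Finset.sum_congr rfl
    intro z _
    show (sndAH R M) ((Submodule.subtype J) ((s w) z • id z)) = fst (z : A) • snd ((s w) z : A)
    show snd ((((s w) z) • z : J) : A) = fst (z : A) • snd ((s w) z : A)
    rw [Submodule.coe_smul, smul_eq_mul, snd_mul, op_smul_eq_smul, hfst0 z, zero_smul, zero_add]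
  set p : Submodule R M := LinearMap.range (DistribMulAction.toLinearMap R M r) with hp
  have hxp : x ∈ p := by
    rw [hx]
    apply Submodule.sum_mem
    intro z _
    obtain ⟨a, ha⟩ := hfstz z
    exact ⟨a • snd ((s w) z : A), by
      simp only [DistribMulAction.toLinearMap, DistribSMul.toLinearMap_apply, ha, ← smul_smul, mul_smul]
      rw [smul_comm]⟩
  obtain ⟨y, hy⟩ := hxp
  exact ⟨y, hy⟩

end Aux3

section Aux4
variable {R M : Type*} [CommRing R] [AddCommGroup M] [Module R M]
    [Module Rᵐᵒᵖ M] [IsCentralScalar R M]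

private theorem pruferR_of_prufer [Nontrivial R]
    (htf : ∀ r ∈ nonZeroDivisors R, Function.Injective fun x : M => r • x)
    (hPA : IsPruferRing (TrivSqZeroExt R M)) : IsPruferRing R := by
  classical
  rintro I hIne hIfg ⟨r, hrI, hr⟩
  set A := TrivSqZeroExt R M
  set J : Ideal A := I.map (inlHom R M) with hJ
  have hrJ : (inl r : A) ∈ J := Ideal.mem_map_of_mem _ hrI
  have hJfg : J.FG := Ideal.FG.map hIfg (inlHom R M)
  have hrne : (inl r : A) ≠ 0 := fun h0 =>
    nonZeroDivisors.ne_zero hr (by simpa using congrArg TrivSqZeroExt.fst h0)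
  have hJne : J ≠ ⊥ := (Submodule.ne_bot_iff J).mpr ⟨_, hrJ, hrne⟩
  have hproj := hPA J hJne hJfg ⟨inl r, hrJ, inl_mem_nzd htf hr⟩
  obtain ⟨s, hs⟩ := Module.projective_def.mp hproj
  have hmapJ : Ideal.map (fstRH R M) J = I := by
    rw [hJ, Ideal.map_map]
    have hcomp : (fstRH R M).comp (inlHom R M) = RingHom.id R := by
      ext t
      simp [fstRH]
    rw [hcomp, Ideal.map_id]
  have hfstmem : ∀ z : A, z ∈ J → fst z ∈ I := fun z hz => by
    rw [← hmapJ]; exact Ideal.mem_map_of_mem _ hz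
  set v : J → I := fun z => ⟨fst (z : A), hfstmem _ z.2⟩ with hv
  have hinlmem : ∀ b : I, (inl (b : R) : A) ∈ J := fun b => Ideal.mem_map_of_mem _ b.2
  set e : I → J := fun b => ⟨inl (b : R), hinlmem b⟩ with he
  have headd : ∀ b b' : I, e (b + b') = e b + e b' := by
    intro b b'
    apply Subtype.ext
    show (inl (((b : R) + (b' : R))) : A) = inl (b : R) + inl (b' : R)
    apply TrivSqZeroExt.ext <;> simp
  have hesmul : ∀ (t : R) (b : I), e (t • b) = (inl t : A) • e b := by
    intro t b
    apply Subtype.ext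
    show (inl (t * (b : R)) : A) = inl t * inl (b : R)
    apply TrivSqZeroExt.ext <;> simp
  set c : I →ₗ[R] (J →₀ R) :=
    { toFun := fun b => (s (e b)).mapRange TrivSqZeroExt.fst fst_zero
      map_add' := by
        intro b b'
        show Finsupp.mapRange TrivSqZeroExt.fst fst_zero (s (e (b + b'))) =
          Finsupp.mapRange TrivSqZeroExt.fst fst_zero (s (e b)) +
          Finsupp.mapRange TrivSqZeroExt.fst fst_zero (s (e b'))
        rw [headd, map_add]
        ext z
        simp [Finsupp.mapRange_apply, fst_add]
      map_smul' := by
        intro t b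
        show Finsupp.mapRange TrivSqZeroExt.fst fst_zero (s (e (t • b))) =
          (RingHom.id R) t • Finsupp.mapRange TrivSqZeroExt.fst fst_zero (s (e b))
        rw [hesmul, map_smul]
        ext z
        simp only [Finsupp.mapRange_apply, Finsupp.smul_apply, RingHom.id_apply, smul_eq_mul]
        rw [fst_mul, fst_inl] } with hc
  apply projective_of_dual v c
  intro b
  apply Subtype.ext
  have h1 := congrArg (fun u : J => fst ((J.subtype) u)) (hs (e b))
  rw [Finsupp.linearCombination_apply, map_finsuppSum] at h1
  have h2 : fst ((J.subtype) (e b) : A) = (b : R) := rfl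
  have h3 : (fstRH R M) (((s (e b)).sum fun z a => (J.subtype) (a • id z)) : A)
      = (s (e b)).sum fun z a => fst (a : A) * fst (z : A) := by
    rw [map_finsuppSum]
    apply Finsupp.sum_congr
    intro z _
    show fst ((((s (e b)) z) • z : J) : A) = _
    rw [Submodule.coe_smul, smul_eq_mul, fst_mul]
  have hval : (I.subtype) (Finsupp.linearCombination R v (c b))
      = (s (e b)).sum fun z a => fst (a : A) * fst (z : A) := by
    rw [Finsupp.linearCombination_apply, map_finsuppSum, hc]
    simp only [LinearMap.coe_mk, AddHom.coe_mk]
    rw [Finsupp.sum_mapRange_index (by intro a; simp)]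
    apply Finsupp.sum_congr
    intro z _
    show ((TrivSqZeroExt.fst ((s (e b)) z) • v z : I) : R) = _
    rw [Submodule.coe_smul, hv, smul_eq_mul]
  exact hval.trans (h3.symm.trans (h1.trans h2))


end Aux4

section Aux5
variable {R M : Type*} [CommRing R] [AddCommGroup M] [Module R M]
    [Module Rᵐᵒᵖ M] [IsCentralScalar R M]

private theorem prufer_of_pruferR [Nontrivial R]
    (htf : ∀ r ∈ nonZeroDivisors R, Function.Injective fun x : M => r • x)
    (hPR : IsPruferRing R)
    (hdiv : ∀ r ∈ nonZeroDivisors R, ∀ x : M, ∃ y : M, r • y = x) :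
    IsPruferRing (TrivSqZeroExt R M) := by
  classical
  rintro J hJne hJfg ⟨z₀, hz₀J, hz₀⟩
  set r₀ : R := fst z₀ with hr₀def
  have hr₀ : r₀ ∈ nonZeroDivisors R := fst_mem_nzd hz₀
  have hinrJ : ∀ x : M, (inr x : TrivSqZeroExt R M) ∈ J := by
    intro x
    obtain ⟨y, hy⟩ := hdiv r₀ hr₀ x
    have hx : (inr x : TrivSqZeroExt R M) = inr y * z₀ := by
      apply TrivSqZeroExt.ext
      · rw [fst_inr, fst_mul, fst_inr, zero_mul]
      · rw [snd_mul, snd_inr, fst_inr, op_smul_eq_smul, zero_smul, zero_add, snd_inr, ← hr₀def, hy]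
    rw [hx]
    exact J.mul_mem_left _ hz₀J
  set I : Ideal R := J.map (fstRH R M) with hI
  have hfstsurj : Function.Surjective (fstRH R M) := fun t => ⟨inl t, rfl⟩
  have hJmem : ∀ w : (TrivSqZeroExt R M), w ∈ J ↔ fst w ∈ I := by
    intro w
    constructor
    · exact fun hw => Ideal.mem_map_of_mem _ hw
    · intro hw
      obtain ⟨u, huJ, hu⟩ := (Ideal.mem_map_iff_of_surjective (fstRH R M) hfstsurj).mp hw
      have hw2 : w = u + inr (snd w - snd u) := by
        apply TrivSqZeroExt.ext
        · rw [fst_add, fst_inr, add_zero]; exact hu.symm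
        · rw [snd_add, snd_inr]; abel
      rw [hw2]
      exact J.add_mem huJ (hinrJ _)
  have hIfg : I.FG := Ideal.FG.map hJfg _
  have hr₀I : r₀ ∈ I := Ideal.mem_map_of_mem _ hz₀J
  have hr₀ne : r₀ ≠ 0 := nonZeroDivisors.ne_zero hr₀
  have hIne : I ≠ ⊥ := (Submodule.ne_bot_iff I).mpr ⟨r₀, hr₀I, hr₀ne⟩
  obtain ⟨sI, hsI⟩ := Module.projective_def.mp (hPR I hIne hIfg ⟨r₀, hr₀I, hr₀⟩)
  set i₀ : I := ⟨r₀, hr₀I⟩ with hi₀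
  have hsym : ∀ (z b b' : I), ((sI b) z) * (b' : R) = ((sI b') z) * (b : R) := by
    intro z b b'
    have h1 : (b' : R) • b = (b : R) • b' := Subtype.ext (mul_comm _ _)
    have h2 : ((b' : R) • sI b) z = ((b : R) • sI b') z := by
      rw [← map_smul, ← map_smul, h1]
    simpa [Finsupp.smul_apply, smul_eq_mul, mul_comm] using h2
  set emul : M ≃ₗ[R] M := LinearEquiv.ofBijective (DistribMulAction.toLinearMap R M r₀)
    ⟨htf r₀ hr₀, fun x => (hdiv r₀ hr₀ x).imp fun y hy => hy⟩ with hemul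
  have hemul_apply : ∀ m : M, emul m = r₀ • m := fun m => rfl
  have hinlI : ∀ z : I, (inl (z : R) : TrivSqZeroExt R M) ∈ J := fun z => (hJmem _).mpr (by simpa using z.2)
  set v : I → J := fun z => ⟨inl (z : R), hinlI z⟩ with hv
  set bmap : J → I := fun w => ⟨fst (w : TrivSqZeroExt R M), (hJmem _).mp w.2⟩ with hbmap
  set cfun : J → (I →₀ (TrivSqZeroExt R M)) := fun w =>
    (sI (bmap w)).mapRange inl (inl_zero M) +
      (sI i₀).mapRange (fun t => (inr (t • emul.symm (snd (w : TrivSqZeroExt R M))) : TrivSqZeroExt R M)) (by simp) with hcfun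
  have hcfun_apply : ∀ (w : J) (z : I), cfun w z =
      inl ((sI (bmap w)) z) + inr (((sI i₀) z) • emul.symm (snd (w : TrivSqZeroExt R M))) := by
    intro w z
    simp [hcfun, Finsupp.add_apply, Finsupp.mapRange_apply]
  have hbadd : ∀ w w' : J, bmap (w + w') = bmap w + bmap w' := by
    intro w w'
    apply Subtype.ext
    show fst ((w : TrivSqZeroExt R M) + (w' : TrivSqZeroExt R M)) = fst (w : TrivSqZeroExt R M) + fst (w' : TrivSqZeroExt R M)
    exact fst_add _ _
  have hbsmul : ∀ (a : TrivSqZeroExt R M) (w : J), bmap (a • w) = fst a • bmap w := by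
    intro a w
    apply Subtype.ext
    show fst ((a • w : J) : TrivSqZeroExt R M) = fst a * fst (w : TrivSqZeroExt R M)
    rw [Submodule.coe_smul, smul_eq_mul, fst_mul]
  have hkey : ∀ (w : J) (z : I) (m : M),
      ((sI i₀) z) • emul.symm ((fst (w : TrivSqZeroExt R M)) • m) = ((sI (bmap w)) z) • m := by
    intro w z m
    apply emul.injective
    have e1 : emul (((sI i₀) z) • emul.symm ((fst (w : TrivSqZeroExt R M)) • m))
        = (((sI i₀) z) * fst (w : TrivSqZeroExt R M)) • m := by
      rw [map_smul emul, emul.apply_symm_apply, smul_smul]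
    have e2 : emul (((sI (bmap w)) z) • m) = (((sI (bmap w)) z) * r₀) • m := by
      rw [map_smul emul, hemul_apply, smul_smul]
    rw [e1, e2]
    exact congrArg (fun t => t • m) (hsym z i₀ (bmap w))
  set c : J →ₗ[(TrivSqZeroExt R M)] (I →₀ (TrivSqZeroExt R M)) :=
    { toFun := cfun
      map_add' := by
        intro w w'
        refine Finsupp.ext fun z => ?_
        have hsnd : snd ((w + w' : J) : TrivSqZeroExt R M)
            = snd (w : TrivSqZeroExt R M) + snd (w' : TrivSqZeroExt R M) := by
          rw [Submodule.coe_add, snd_add]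
        show inl ((sI (bmap (w + w'))) z)
              + inr (((sI i₀) z) • emul.symm (snd ((w + w' : J) : TrivSqZeroExt R M)))
            = (inl ((sI (bmap w)) z)
              + inr (((sI i₀) z) • emul.symm (snd (w : TrivSqZeroExt R M))))
              + (inl ((sI (bmap w')) z)
              + inr (((sI i₀) z) • emul.symm (snd (w' : TrivSqZeroExt R M))))
        rw [hsnd, hbadd, map_add, Finsupp.add_apply, map_add, smul_add, inl_add, inr_add]
        abel
      map_smul' := by
        intro a w
        refine Finsupp.ext fun z => ?_
        have hsnd : snd ((a • w : J) : TrivSqZeroExt R M)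
            = fst a • snd (w : TrivSqZeroExt R M) + fst (w : TrivSqZeroExt R M) • snd a := by
          rw [Submodule.coe_smul, smul_eq_mul, snd_mul, op_smul_eq_smul]
        show inl ((sI (bmap (a • w))) z)
              + inr (((sI i₀) z) • emul.symm (snd ((a • w : J) : TrivSqZeroExt R M)))
            = a • (inl ((sI (bmap w)) z)
              + inr (((sI i₀) z) • emul.symm (snd (w : TrivSqZeroExt R M))))
        rw [hsnd, hbsmul, map_smul, Finsupp.smul_apply, smul_eq_mul, map_add, smul_add,
          map_smul emul.symm (fst a), smul_comm ((sI i₀) z) (fst a), hkey w z (snd a),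
          smul_eq_mul]
        apply TrivSqZeroExt.ext
        · simp [fst_mul, fst_add, mul_add]
        · simp only [snd_add, snd_inl, snd_inr, zero_add, snd_mul, fst_add, fst_inl, fst_inr,
            add_zero, op_smul_eq_smul, smul_add, smul_zero] }
  apply projective_of_dual v c
  intro w
  apply Subtype.ext
  show J.subtype (Finsupp.linearCombination (TrivSqZeroExt R M) v (c w)) = (w : TrivSqZeroExt R M)
  have hcw : c w = (sI (bmap w)).mapRange inl (inl_zero M) +
      (sI i₀).mapRange (fun t => (inr (t • emul.symm (snd (w : TrivSqZeroExt R M))) : TrivSqZeroExt R M)) (by simp) := rfl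
  rw [hcw, map_add, map_add]
  -- first summand gives inl (fst w)
  have hIbase : ∀ b : I, ((sI b).sum fun z t => t • (z : R)) = (b : R) := by
    intro b
    have h1 := congrArg (I.subtype) (hsI b)
    rw [Finsupp.linearCombination_apply, map_finsuppSum] at h1
    exact h1
  have h1 : J.subtype (Finsupp.linearCombination (TrivSqZeroExt R M) v
        ((sI (bmap w)).mapRange inl (inl_zero M)))
      = inl (fst (w : TrivSqZeroExt R M)) := by
    have hterm : ∀ (z : I) (t : R), J.subtype ((inl t : TrivSqZeroExt R M) • v z)
        = (inlHom R M) (t • (z : R)) := by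
      intro z t
      show (inl t : TrivSqZeroExt R M) * inl (z : R) = inl (t * (z : R))
      apply TrivSqZeroExt.ext <;> simp
    calc J.subtype (Finsupp.linearCombination (TrivSqZeroExt R M) v
            ((sI (bmap w)).mapRange inl (inl_zero M)))
        = ((sI (bmap w)).mapRange inl (inl_zero M)).sum
            fun z a => J.subtype (a • v z) := by
          rw [Finsupp.linearCombination_apply, map_finsuppSum]
      _ = (sI (bmap w)).sum fun z t => J.subtype ((inl t : TrivSqZeroExt R M) • v z) :=
          Finsupp.sum_mapRange_index (by intro z; simp)
      _ = (sI (bmap w)).sum fun z t => (inlHom R M) (t • (z : R)) :=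
          Finsupp.sum_congr fun z _ => hterm z _
      _ = (inlHom R M) ((sI (bmap w)).sum fun z t => t • (z : R)) :=
          (map_finsuppSum _ _ _).symm
      _ = inl (fst (w : TrivSqZeroExt R M)) := by rw [hIbase (bmap w)]; rfl
  have h2 : J.subtype (Finsupp.linearCombination (TrivSqZeroExt R M) v
        ((sI i₀).mapRange (fun t => (inr (t • emul.symm (snd (w : TrivSqZeroExt R M))) : TrivSqZeroExt R M)) (by simp)))
      = inr (snd (w : TrivSqZeroExt R M)) := by
    have hterm : ∀ (z : I) (t : R),
        J.subtype ((inr (t • emul.symm (snd (w : TrivSqZeroExt R M))) : TrivSqZeroExt R M) • v z)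
          = (inrHom R M) ((t • (z : R)) • emul.symm (snd (w : TrivSqZeroExt R M))) := by
      intro z t
      show (inr (t • emul.symm (snd (w : TrivSqZeroExt R M))) : TrivSqZeroExt R M) * inl (z : R)
          = (inrHom R M) ((t • (z : R)) • emul.symm (snd (w : TrivSqZeroExt R M)))
      rw [inr_mul_inl, op_smul_eq_smul, smul_smul, mul_comm ((z : R)) t]
      rfl
    calc J.subtype (Finsupp.linearCombination (TrivSqZeroExt R M) v
            ((sI i₀).mapRange (fun t => (inr (t • emul.symm (snd (w : TrivSqZeroExt R M))) : TrivSqZeroExt R M)) (by simp)))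
        = ((sI i₀).mapRange (fun t => (inr (t • emul.symm (snd (w : TrivSqZeroExt R M))) : TrivSqZeroExt R M)) (by simp)).sum
            fun z a => J.subtype (a • v z) := by
          rw [Finsupp.linearCombination_apply, map_finsuppSum]
      _ = (sI i₀).sum fun z t =>
            J.subtype ((inr (t • emul.symm (snd (w : TrivSqZeroExt R M))) : TrivSqZeroExt R M) • v z) :=
          Finsupp.sum_mapRange_index (by intro z; simp)
      _ = (sI i₀).sum fun z t =>
            (inrHom R M) ((t • (z : R)) • emul.symm (snd (w : TrivSqZeroExt R M))) :=
          Finsupp.sum_congr fun z _ => hterm z _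
      _ = (inrHom R M) ((sI i₀).sum fun z t =>
            (t • (z : R)) • emul.symm (snd (w : TrivSqZeroExt R M))) :=
          (map_finsuppSum _ _ _).symm
      _ = inr (snd (w : TrivSqZeroExt R M)) := by
          have hs : ((sI i₀).sum fun z t => (t • (z : R)) • emul.symm (snd (w : TrivSqZeroExt R M)))
              = ((sI i₀).sum fun z t => t • (z : R)) • emul.symm (snd (w : TrivSqZeroExt R M)) := by
            simp only [Finsupp.sum]
            rw [Finset.sum_smul]
          rw [hs, hIbase i₀, ← hemul_apply, emul.apply_symm_apply]
          rfl
  rw [h1, h2]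
  exact inl_fst_add_inr_snd_eq (w : TrivSqZeroExt R M)

end Aux5

theorem stmt13 {R M : Type*} [CommRing R] [AddCommGroup M] [Module R M]
    [Module Rᵐᵒᵖ M] [IsCentralScalar R M]
    (hR : IsDomain R ∨ IsLocalRing R)
    (htf : ∀ r ∈ nonZeroDivisors R, Function.Injective fun x : M => r • x) :
    IsPruferRing (TrivSqZeroExt R M) ↔
      (IsPruferRing R ∧
        ∀ (m : Ideal R) [m.IsMaximal], ∀ r ∈ nonZeroDivisors R,
          r • (⊤ : Submodule R (LocalizedModule m.primeCompl M)) = ⊤) := by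
  have : Nontrivial R := hR.elim (fun h => h.toNontrivial) (fun h => h.toNontrivial)
  constructor
  · intro hPA
    refine ⟨pruferR_of_prufer htf hPA, ?_⟩
    intro m _ r hr
    exact div_local_of_global (fun r hr x => div_of_prufer htf hPA hr x) m hr
  · rintro ⟨hPR, hloc⟩
    exact prufer_of_pruferR htf hPR (fun r hr x => div_global_of_local hloc hr x)
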